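/- (Random Target Lemma) For an irreducible reversible Markov chain on {1,…,n} with transition matrix P and stationary distribution π, the quantity Σ_j π_j H(i,j) is independent of i and equals Σ_{k=2}^n 1/(1 - α_k(P)), where 1 = α₁ > α₂ ≥ … ≥ α_n are the eigenvalues of P. -/

import Mathlib

open Polynomial

lemma coeff_zero_prod_lin {ι : Type*} (s : Finset ι) (c : ι → ℝ) :
    (∏ k ∈ s, ((C (c k) : ℝ[X]) - X)).coeff 0 = ∏ k ∈ s, c k := by
  rw [Polynomial.coeff_zero_eq_eval_zero, Polynomial.eval_prod]
  simp

lemma coeff_one_prod_lin {ι : Type*} [DecidableEq ι] (s : Finset ι) (c : ι → ℝ) :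
    (∏ k ∈ s, ((C (c k) : ℝ[X]) - X)).coeff 1 = -∑ k ∈ s, ∏ j ∈ s.erase k, c j := by
  induction s using Finset.induction with
  | empty => simp [Polynomial.coeff_one]
  | insert _ _ ha ih =>
    rename_i a s
    rw [Finset.prod_insert ha, sub_mul, Polynomial.coeff_sub, Polynomial.coeff_C_mul,
      Polynomial.coeff_X_mul, ih, coeff_zero_prod_lin]
    rw [Finset.sum_insert ha, Finset.erase_insert ha]
    have h2 : ∀ k ∈ s, ∏ j ∈ (insert a s).erase k, c j = c a * ∏ j ∈ s.erase k, c j := by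
      intro k hk
      have hka : k ≠ a := fun h => ha (h ▸ hk)
      rw [Finset.erase_insert_of_ne hka.symm,
        Finset.prod_insert (fun h => ha (Finset.mem_of_mem_erase h))]
    rw [Finset.sum_congr rfl h2, ← Finset.mul_sum]
    ring

theorem stmt_10 {n : ℕ} (hn : 1 ≤ n)
    (P : Matrix (Fin n) (Fin n) ℝ)
    (hPnonneg : ∀ x y, 0 ≤ P x y)
    (hProw : ∀ x, ∑ y, P x y = 1)
    (hirr : ∀ x y : Fin n, ∃ k : ℕ, 0 < (P ^ k) x y)
    (π : Fin n → ℝ) (hπpos : ∀ x, 0 < π x) (hπsum : ∑ x, π x = 1)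
    (hstat : ∀ y, ∑ x, π x * P x y = π y)
    (hrev : ∀ x y, π x * P x y = π y * P y x)
    (α : Fin n → ℝ) (hα : Antitone α)
    (hα1 : α ⟨0, hn⟩ = 1) (hαlt : ∀ k : Fin n, k ≠ ⟨0, hn⟩ → α k < 1)
    (hchar : P.charpoly = ∏ k : Fin n, (X - C (α k)))
    (H : Fin n → Fin n → ℝ)
    (hH0 : ∀ x, H x x = 0)
    (hHrec : ∀ x y, x ≠ y → H x y = 1 + ∑ z, P x z * H z y) :
    ∀ i : Fin n, ∑ j, π j * H i j = ∑ k ∈ Finset.univ \ {(⟨0, hn⟩ : Fin n)}, 1 / (1 - α k) := by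
  classical
  set j0 : Fin n := ⟨0, hn⟩ with hj0
  set M : Matrix (Fin n) (Fin n) ℝ :=
    1 - P + Matrix.of (fun _ y => π y) with hM
  have hMapp : ∀ x y, M x y = (1 : Matrix (Fin n) (Fin n) ℝ) x y - P x y + π y := by
    intro x y
    simp [hM, Matrix.sub_apply, Matrix.add_apply]
  have hMrow : ∀ x, ∑ y, M x y = 1 := by
    intro x
    simp only [hMapp]
    rw [Finset.sum_add_distrib, Finset.sum_sub_distrib, hProw, hπsum]
    have : ∑ y, (1 : Matrix (Fin n) (Fin n) ℝ) x y = 1 := by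
      simp [Matrix.one_apply]
    rw [this]; ring
  set F : ℝ[X] := (M.map C - (X : ℝ[X]) • 1).det with hF
  set c : Fin n → ℝ := fun k => if k = j0 then 1 else 1 - α k with hc
  have hcpos : ∀ k, 0 < c k := by
    intro k
    by_cases hk : k = j0 <;> simp [hc, hk]
    · linarith [hαlt k hk]
  have hc0 : ∀ k, c k ≠ 0 := fun k => ne_of_gt (hcpos k)
  set Qp : ℝ[X] := ∏ k : Fin n, ((C (c k) : ℝ[X]) - X) with hQp
  have hevalF : ∀ t : ℝ, F.eval t = (M - t • 1).det := by
    intro t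
    rw [hF, ← Polynomial.coe_evalRingHom, RingHom.map_det]
    congr 1
    ext x y
    by_cases h : x = y <;>
      simp [Matrix.map_apply, Matrix.sub_apply, Matrix.smul_apply, Matrix.one_apply, h]
  have heval : ∀ t : ℝ, t ≠ 0 → (∀ k : Fin n, 1 - t - α k ≠ 0) →
      (M - t • 1).det = (1 - t) * ∏ k ∈ Finset.univ.erase j0, (1 - t - α k) := by
    intro t ht hroot
    set A : Matrix (Fin n) (Fin n) ℝ := (1 - t) • (1 : Matrix (Fin n) (Fin n) ℝ) - P
      with hA
    have hAapp : ∀ x y, A x y = (1 - t) * (1 : Matrix (Fin n) (Fin n) ℝ) x y - P x y := by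
      intro x y; simp [hA, Matrix.sub_apply, Matrix.smul_apply]
    have hchm : (Matrix.charmatrix P).map (eval (1 - t)) = A := by
      ext x y
      by_cases h : x = y
      · subst h
        simp [Matrix.charmatrix_apply_eq, hAapp, Matrix.one_apply]
      · simp [Matrix.charmatrix_apply_ne _ _ _ h, hAapp, Matrix.one_apply_ne h]
    have hdetA : A.det = (-t) * ∏ k ∈ Finset.univ.erase j0, (1 - t - α k) := by
      have h1 : A.det = (P.charpoly).eval (1 - t) := by
        have h2 : P.charpoly = (Matrix.charmatrix P).det := rfl
        rw [← hchm, h2, ← Polynomial.coe_evalRingHom, RingHom.map_det]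
        rfl
      rw [h1, hchar, eval_prod]
      simp only [eval_sub, eval_X, eval_C]
      rw [← Finset.mul_prod_erase Finset.univ _ (Finset.mem_univ j0), hα1]
      have hfix : ∀ k ∈ Finset.univ.erase j0, (1 - t) - α k = 1 - t - α k :=
        fun k _ => by ring
      rw [Finset.prod_congr rfl hfix]
      ring
    have hAunit : IsUnit A.det := by
      rw [hdetA]
      exact isUnit_iff_ne_zero.2 (mul_ne_zero (neg_ne_zero.2 ht)
        (Finset.prod_ne_zero_iff.2 fun k _ => hroot k))
    have hcr : ∀ x y, (Matrix.replicateCol Unit (fun _ : Fin n => (1 : ℝ)) * Matrix.replicateRow Unit π) x y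
        = π y := by
      intro x y
      rw [Matrix.mul_apply]
      simp [Matrix.replicateCol, Matrix.replicateRow]
    have hsplitM : M - t • 1
        = A + Matrix.replicateCol Unit (fun _ : Fin n => (1 : ℝ)) * Matrix.replicateRow Unit π := by
      ext x y
      rw [Matrix.add_apply, hcr, Matrix.sub_apply, Matrix.smul_apply, hMapp, hAapp,
        smul_eq_mul]
      ring
    rw [hsplitM, Matrix.det_add_replicateCol_mul_replicateRow hAunit]
    have hAinvA : A⁻¹ * A = 1 := Matrix.nonsing_inv_mul A hAunit
    have hArow : ∀ x, ∑ y, A x y = -t := by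
      intro x
      simp_rw [hAapp]
      rw [Finset.sum_sub_distrib, ← Finset.mul_sum]
      have : ∑ y, (1 : Matrix (Fin n) (Fin n) ℝ) x y = 1 := by simp [Matrix.one_apply]
      rw [this, hProw]
      ring
    have hAirow : ∀ x, ∑ y, A⁻¹ x y = (-t)⁻¹ := by
      intro x
      have h1 : (∑ y, A⁻¹ x y) * (-t) = 1 := by
        rw [Finset.sum_mul]
        calc ∑ y, A⁻¹ x y * (-t) = ∑ y, A⁻¹ x y * ∑ v, A y v := by simp_rw [hArow]
          _ = ∑ v, ∑ y, A⁻¹ x y * A y v := by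
              simp_rw [Finset.mul_sum]; rw [Finset.sum_comm]
          _ = ∑ v, (1 : Matrix (Fin n) (Fin n) ℝ) x v := by
              refine Finset.sum_congr rfl fun v _ => ?_
              rw [← Matrix.mul_apply, hAinvA]
          _ = 1 := by simp [Matrix.one_apply]
      exact eq_inv_of_mul_eq_one_left h1
    have hsmall : (1 + Matrix.replicateRow Unit π * A⁻¹ * Matrix.replicateCol Unit (fun _ : Fin n => (1 : ℝ))).det
        = 1 + (-t)⁻¹ := by
      rw [Matrix.det_unique, Matrix.add_apply, Matrix.one_apply_eq]
      congr 1
      rw [Matrix.mul_apply]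
      have : ∀ x, (Matrix.replicateRow Unit π * A⁻¹) default x
          * Matrix.replicateCol Unit (fun _ : Fin n => (1 : ℝ)) x default
          = ∑ w, π w * A⁻¹ w x := by
        intro x
        rw [Matrix.mul_apply]
        simp [Matrix.replicateCol, Matrix.replicateRow]
      simp_rw [this]
      rw [Finset.sum_comm]
      have h2 : ∀ w, ∑ x, π w * A⁻¹ w x = π w * (-t)⁻¹ := by
        intro w
        rw [← Finset.mul_sum, hAirow]
      simp_rw [h2]
      rw [← Finset.sum_mul, hπsum, one_mul]
    rw [hsmall, hdetA]
    have hmt : (-t) * (1 + (-t)⁻¹) = 1 - t := by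
      have h5 : (-t) * (-t)⁻¹ = 1 := mul_inv_cancel₀ (neg_ne_zero.2 ht)
      rw [mul_add, h5]; ring
    linear_combination (∏ k ∈ Finset.univ.erase j0, (1 - t - α k)) * hmt
  have hFQ : F = Qp := by
    apply Polynomial.eq_of_infinite_eval_eq
    have hfin2 : (({(0 : ℝ)} : Set ℝ) ∪ Set.range (fun k : Fin n => 1 - α k)).Finite :=
      (Set.finite_singleton 0).union (Set.finite_range _)
    refine hfin2.infinite_compl.mono ?_
    intro t ht
    simp only [Set.mem_compl_iff, Set.mem_union, Set.mem_singleton_iff, Set.mem_range,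
      not_or, not_exists] at ht
    obtain ⟨ht0, htr'⟩ := ht
    have hroot : ∀ k : Fin n, 1 - t - α k ≠ 0 := by
      intro k h
      exact htr' k (by linarith)
    show eval t F = eval t Qp
    rw [hevalF t, heval t ht0 hroot, hQp, eval_prod]
    simp only [eval_sub, eval_C, eval_X]
    rw [← Finset.mul_prod_erase Finset.univ _ (Finset.mem_univ j0)]
    have hcongr2 : ∀ k ∈ Finset.univ.erase j0, c k - t = 1 - t - α k := by
      intro k hk
      have hk' := (Finset.mem_erase.1 hk).1
      simp only [hc, hk', if_false]
      ring
    rw [Finset.prod_congr rfl hcongr2]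
    have : c j0 = 1 := by simp [hc]
    rw [this]
  have hdetM : M.det = ∏ k : Fin n, c k := by
    have h0 : F.eval 0 = M.det := by
      rw [hevalF 0]
      congr 1
      ext x y
      simp [Matrix.sub_apply, Matrix.smul_apply]
    rw [hFQ, hQp] at h0
    rw [← h0, eval_prod]
    simp
  have hdetM0 : M.det ≠ 0 := by
    rw [hdetM]; exact Finset.prod_ne_zero_iff.2 fun k _ => hc0 k
  have hMunit : IsUnit M.det := isUnit_iff_ne_zero.2 hdetM0
  set Z : Matrix (Fin n) (Fin n) ℝ := M⁻¹ with hZ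
  have hZM : Z * M = 1 := Matrix.nonsing_inv_mul M hMunit
  have hMZ : M * Z = 1 := Matrix.mul_nonsing_inv M hMunit
  have htr : Z.trace = ∑ k : Fin n, (c k)⁻¹ := by
    have hfac : M.map C - (X : ℝ[X]) • 1 = M.map C * (1 + (X : ℝ[X]) • (-Z).map C) := by
      rw [Matrix.mul_add, Matrix.mul_one, Matrix.mul_smul, ← Matrix.map_mul,
        Matrix.mul_neg, hMZ]
      ext x y
      by_cases h : x = y <;>
        simp [Matrix.map_apply, Matrix.sub_apply, Matrix.add_apply, Matrix.smul_apply,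
          Matrix.neg_apply, Matrix.one_apply, h, sub_eq_add_neg]
    have hF2 : F = C M.det * (1 + (X : ℝ[X]) • (-Z).map C).det := by
      rw [hF, hfac, Matrix.det_mul]
      congr 1
      rw [← RingHom.mapMatrix_apply, ← RingHom.map_det]
    have hco : F.coeff 1 = M.det * (-Z).trace := by
      rw [hF2, Polynomial.coeff_C_mul, Matrix.coeff_det_one_add_X_smul_one]
    rw [hFQ, hQp, coeff_one_prod_lin] at hco
    have herase : ∀ k : Fin n, ∏ j ∈ Finset.univ.erase k, c j
        = (∏ j : Fin n, c j) * (c k)⁻¹ := by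
      intro k
      rw [← Finset.mul_prod_erase Finset.univ c (Finset.mem_univ k),
        mul_comm (c k), mul_assoc, mul_inv_cancel₀ (hc0 k), mul_one]
    simp_rw [herase] at hco
    rw [← Finset.mul_sum, Matrix.trace_neg, ← hdetM, mul_neg, neg_inj] at hco
    exact (mul_left_cancel₀ hdetM0 hco).symm
  -- row sums of Z are 1
  have hZrow : ∀ x, ∑ y, Z x y = 1 := by
    intro x
    have h1 : ∑ y, Z x y = ∑ y, Z x y * ∑ v, M y v := by
      simp [hMrow]
    rw [h1]
    simp_rw [Finset.mul_sum]
    rw [Finset.sum_comm]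
    have h2 : ∀ v, ∑ y, Z x y * M y v = (1 : Matrix (Fin n) (Fin n) ℝ) x v := by
      intro v; rw [← Matrix.mul_apply, hZM]
    simp_rw [h2]
    simp [Matrix.one_apply]
  -- return time identity
  have hret : ∀ y, ∑ z, P y z * H z y = 1 / π y - 1 := by
    intro y
    have hswap : ∑ x, π x * ∑ z, P x z * H z y = ∑ z, π z * H z y := by
      simp_rw [Finset.mul_sum]
      rw [Finset.sum_comm]
      refine Finset.sum_congr rfl fun z _ => ?_
      simp_rw [← mul_assoc]
      rw [← Finset.sum_mul, hstat z]
    have hE : ∑ x, π x * H x y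
        = ∑ x ∈ Finset.univ.erase y, π x * (1 + ∑ z, P x z * H z y) := by
      rw [← Finset.add_sum_erase _ _ (Finset.mem_univ y), hH0 y, mul_zero, zero_add]
      refine Finset.sum_congr rfl fun x hx => ?_
      rw [← hHrec x y (Finset.mem_erase.1 hx).1]
    have h2 : ∑ x ∈ Finset.univ.erase y, π x * (1 + ∑ z, P x z * H z y)
        = (∑ x ∈ Finset.univ.erase y, π x)
          + ((∑ x, π x * ∑ z, P x z * H z y) - π y * ∑ z, P y z * H z y) := by
      simp_rw [mul_add, mul_one]
      rw [Finset.sum_add_distrib]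
      congr 1
      rw [← Finset.add_sum_erase _ (fun x => π x * ∑ z, P x z * H z y)
        (Finset.mem_univ y)]
      ring
    have h3 : ∑ x ∈ Finset.univ.erase y, π x = 1 - π y := by
      have := Finset.add_sum_erase Finset.univ π (Finset.mem_univ y)
      rw [hπsum] at this
      linarith
    rw [h2, h3, hswap] at hE
    have hπy := (hπpos y).ne'
    have : π y * ∑ z, P y z * H z y = 1 - π y := by linarith
    field_simp
    linarith [this]
  set ty : Fin n → ℝ := fun y => ∑ z, π z * H z y with hty0
  have hMh : ∀ x y, ∑ w, M x w * H w y = (1 + ty y) - (if x = y then 1 / π y else 0) := by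
    intro x y
    have hsplit : ∑ w, M x w * H w y
        = (∑ w, (1 : Matrix (Fin n) (Fin n) ℝ) x w * H w y)
          - (∑ w, P x w * H w y) + ∑ w, π w * H w y := by
      simp only [hMapp, sub_mul, add_mul]
      rw [Finset.sum_add_distrib, Finset.sum_sub_distrib]
    have h1 : ∑ w, (1 : Matrix (Fin n) (Fin n) ℝ) x w * H w y = H x y := by
      simp [Matrix.one_apply]
    have hty' : ∑ w, π w * H w y = ty y := rfl
    rw [hsplit, h1, hty']
    by_cases hxy : x = y
    · subst hxy
      rw [hH0, hret x]
      simp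
      ring
    · have := hHrec x y hxy
      simp [hxy]
      linarith
  have hHf : ∀ x y, H x y = (1 + ty y) - Z x y / π y := by
    intro x y
    have key : H x y = ∑ v, Z x v * ∑ w, M v w * H w y := by
      have hone : ∀ w, (∑ v, Z x v * M v w) = (1 : Matrix (Fin n) (Fin n) ℝ) x w := by
        intro w; rw [← Matrix.mul_apply, hZM]
      calc H x y = ∑ w, (1 : Matrix (Fin n) (Fin n) ℝ) x w * H w y := by
            simp [Matrix.one_apply]
        _ = ∑ w, (∑ v, Z x v * M v w) * H w y := by simp_rw [hone]
        _ = ∑ v, Z x v * ∑ w, M v w * H w y := by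
            simp_rw [Finset.sum_mul, Finset.mul_sum, mul_assoc]
            rw [Finset.sum_comm]
    rw [key]
    simp_rw [hMh, mul_sub]
    rw [Finset.sum_sub_distrib, ← Finset.sum_mul, hZrow x, one_mul]
    congr 1
    simp only [mul_ite, mul_zero, Finset.sum_ite_eq', Finset.mem_univ, if_true, mul_one_div]
  have htyv : ∀ y, ty y = Z y y / π y - 1 := by
    intro y
    have := hHf y y
    rw [hH0 y] at this
    have hπ := (hπpos y).ne'
    field_simp at this ⊢
    linarith
  have hHf2 : ∀ x y, H x y = (Z y y - Z x y) / π y := by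
    intro x y
    rw [hHf x y, htyv y]
    have hπ := (hπpos y).ne'
    field_simp
    ring
  intro i
  have hfin : ∑ j, π j * H i j = Z.trace - 1 := by
    have h1 : ∀ j, π j * H i j = Z j j - Z i j := by
      intro j
      rw [hHf2 i j]
      field_simp [(hπpos j).ne']
    simp_rw [h1]
    rw [Finset.sum_sub_distrib, hZrow i, Matrix.trace]
    rfl
  rw [hfin, htr]
  have hsplit : ∑ k : Fin n, (c k)⁻¹ = (c j0)⁻¹ + ∑ k ∈ Finset.univ.erase j0, (c k)⁻¹ :=
    (Finset.add_sum_erase Finset.univ _ (Finset.mem_univ j0)).symm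
  have hcongr : ∑ k ∈ Finset.univ.erase j0, (c k)⁻¹
      = ∑ k ∈ Finset.univ \ {j0}, 1 / (1 - α k) := by
    rw [← Finset.sdiff_singleton_eq_erase]
    refine Finset.sum_congr rfl fun k hk => ?_
    have hk' : k ≠ j0 := by
      have := (Finset.mem_sdiff.1 hk).2
      simpa using this
    simp [hc, hk', one_div]
  have hcj0 : c j0 = 1 := by simp [hc]
  rw [hsplit, hcongr, hcj0]
  ring
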